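/- Let f : ℝ^d → ℝ be differentiable, L-smooth, and μ-PL (f(x) − inf f ≤ (1/(2μ))‖∇f(x)‖²), equal to the average of convex L_i-smooth functions f_i with L_max = max L_i, and let x* minimize f with σ* = (1/n)∑‖∇f_i(x*)‖². For SGD with constant stepsize 0 < α ≤ μ/(2L L_max) and uniformly random index i_t, the expected optimality gap satisfies E[f(x_t)] − inf f ≤ (1 − αμ)^t (f(x_0) − inf f) + (αL/μ)·σ*. -/

import Mathlib

set_option maxHeartbeats 1000000

open InnerProductSpace Set Finset
local notation "⟪" x ", " y "⟫" => inner (𝕜 := ℝ) x y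

variable {d : ℕ}
local notation "E" => EuclideanSpace ℝ (Fin d)

lemma inner_gradient (f : E → ℝ) (x v : E) : ⟪gradient f x, v⟫ = fderiv ℝ f x v := by
  rw [gradient]; exact InnerProductSpace.toDual_symm_apply

lemma hasDerivAt_line (f : E → ℝ) (hf : Differentiable ℝ f) (x v : E) (t : ℝ) :
    HasDerivAt (fun s : ℝ => f (x + s • v)) ⟪gradient f (x + t • v), v⟫ t := by
  have h1 : HasDerivAt (fun s : ℝ => x + s • v) v t := by
    simpa using ((hasDerivAt_id t).smul_const v).const_add x
  have h2 := (hf (x + t • v)).hasFDerivAt.comp_hasDerivAt t h1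
  rw [inner_gradient]
  exact h2

/-- Descent lemma. -/
lemma descent_lemma (f : E → ℝ) (hf : Differentiable ℝ f) (C : ℝ)
    (hlip : ∀ x y : E, ‖gradient f x - gradient f y‖ ≤ C * ‖x - y‖) (x y : E) :
    f y ≤ f x + ⟪gradient f x, y - x⟫ + C / 2 * ‖y - x‖ ^ 2 := by
  set v := y - x with hv
  set g : ℝ → ℝ := fun t => f (x + t • v) - t * ⟪gradient f x, v⟫ - C / 2 * t ^ 2 * ‖v‖ ^ 2 with hg
  have hg' : ∀ t : ℝ, HasDerivAt g
      (⟪gradient f (x + t • v), v⟫ - ⟪gradient f x, v⟫ - C / 2 * (2 * t) * ‖v‖ ^ 2) t := by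
    intro t
    have h1 := hasDerivAt_line f hf x v t
    have h2 : HasDerivAt (fun t : ℝ => t * ⟪gradient f x, v⟫) ⟪gradient f x, v⟫ t := by
      simpa using (hasDerivAt_id t).mul_const ⟪gradient f x, v⟫
    have h3 : HasDerivAt (fun t : ℝ => C / 2 * t ^ 2 * ‖v‖ ^ 2) (C / 2 * (2 * t) * ‖v‖ ^ 2) t := by
      have := ((hasDerivAt_pow 2 t).const_mul (C / 2)).mul_const (‖v‖ ^ 2 : ℝ)
      simpa [mul_comm, mul_assoc] using this
    exact (h1.sub h2).sub h3
  have key : ∀ t ∈ Icc (0:ℝ) 1, ∀ ht : t ∈ interior (Icc (0:ℝ) 1), True := fun _ _ _ => trivial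
  have hanti : AntitoneOn g (Icc (0:ℝ) 1) := by
    apply antitoneOn_of_deriv_nonpos (convex_Icc 0 1)
    · exact Continuous.continuousOn (by
        have : Continuous g := by
          apply Continuous.sub
          apply Continuous.sub
          · exact hf.continuous.comp (by continuity)
          · continuity
          · continuity
        exact this)
    · intro t ht
      exact ((hg' t).differentiableAt).differentiableWithinAt
    · intro t ht
      rw [interior_Icc] at ht
      rw [(hg' t).deriv]
      have hb : ⟪gradient f (x + t • v) - gradient f x, v⟫ ≤ C * t * ‖v‖ ^ 2 := by
        calc ⟪gradient f (x + t • v) - gradient f x, v⟫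
            ≤ ‖gradient f (x + t • v) - gradient f x‖ * ‖v‖ := real_inner_le_norm _ _
          _ ≤ C * ‖(x + t • v) - x‖ * ‖v‖ :=
              mul_le_mul_of_nonneg_right (hlip _ _) (norm_nonneg v)
          _ = C * t * ‖v‖ ^ 2 := by
              rw [add_sub_cancel_left, norm_smul, Real.norm_eq_abs, abs_of_pos ht.1]
              ring
      have : ⟪gradient f (x + t • v), v⟫ - ⟪gradient f x, v⟫ = ⟪gradient f (x + t • v) - gradient f x, v⟫ := by
        rw [inner_sub_left]
      rw [this]
      nlinarith [hb]
  have h01 := hanti (by norm_num : (0:ℝ) ∈ Icc (0:ℝ) 1) (by norm_num : (1:ℝ) ∈ Icc (0:ℝ) 1) zero_le_one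
  simp only [hg, zero_smul, add_zero, one_smul, zero_pow, mul_zero, zero_mul, sub_zero, one_pow,
    mul_one, one_mul] at h01
  have hxy : x + v = y := by simp [hv]
  rw [hxy] at h01
  linarith

/-- First-order condition for convex differentiable functions. -/
lemma convex_first_order (f : E → ℝ) (hconv : ConvexOn ℝ Set.univ f)
    (hf : Differentiable ℝ f) (y z : E) :
    f y + ⟪gradient f y, z - y⟫ ≤ f z := by
  have hφconv : ConvexOn ℝ Set.univ (fun t : ℝ => f (y + t • (z - y))) := by
    have := hconv.comp_affineMap (AffineMap.lineMap y z)
    convert this.subset (subset_univ _) (convex_univ) using 2 with t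
    iterate 4 rfl
    simp [AffineMap.lineMap_apply]
    abel_nf
  have hder : HasDerivAt (fun t : ℝ => f (y + t • (z - y))) ⟪gradient f y, z - y⟫ 0 := by
    have := hasDerivAt_line f hf y (z - y) 0
    simpa using this
  have hs := hφconv.le_slope_of_hasDerivAt (mem_univ (0:ℝ)) (mem_univ (1:ℝ)) zero_lt_one hder
  rw [slope_def_field] at hs
  simp only [zero_smul, add_zero, one_smul, sub_zero, div_one] at hs
  have : y + (z - y) = z := by abel
  rw [this] at hs
  linarith

/-- Gradient of `f - ⟪w, ·⟫`. -/
lemma hasGradientAt_sub_inner (f : E → ℝ) (hf : Differentiable ℝ f) (w x : E) :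
    HasGradientAt (fun z => f z - ⟪w, z⟫) (gradient f x - w) x := by
  rw [hasGradientAt_iff_hasFDerivAt]
  have h1 : HasFDerivAt f (toDual ℝ (EuclideanSpace ℝ (Fin d)) (gradient f x)) x := by
    rw [← hasGradientAt_iff_hasFDerivAt]
    exact (hf x).hasGradientAt
  have h2 : HasFDerivAt (fun z : E => ⟪w, z⟫) (innerSL ℝ w) x :=
    (innerSL ℝ w).hasFDerivAt
  have h3 := h1.sub h2
  have heq : toDual ℝ (EuclideanSpace ℝ (Fin d)) (gradient f x - w)
      = toDual ℝ (EuclideanSpace ℝ (Fin d)) (gradient f x) - innerSL ℝ w := by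
    ext v
    simp [inner_sub_left]
  rw [heq]
  exact h3

/-- Cocoercivity-type inequality for convex functions with Lipschitz gradient. -/
lemma cocoercivity (f : E → ℝ) (hconv : ConvexOn ℝ Set.univ f) (hf : Differentiable ℝ f)
    (C : ℝ) (hC : 0 < C) (hlip : ∀ x y : E, ‖gradient f x - gradient f y‖ ≤ C * ‖x - y‖)
    (x y : E) :
    ‖gradient f x - gradient f y‖ ^ 2 ≤ 2 * C * (f x - f y - ⟪gradient f y, x - y⟫) := by
  set h : E → ℝ := fun z => f z - ⟪gradient f y, z⟫ with hh
  have hdiff : Differentiable ℝ h := hf.sub ((innerSL ℝ (gradient f y)).differentiable)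
  have hgradh : ∀ z, gradient h z = gradient f z - gradient f y :=
    fun z => (hasGradientAt_sub_inner f hf _ z).gradient
  have hliph : ∀ a b : E, ‖gradient h a - gradient h b‖ ≤ C * ‖a - b‖ := by
    intro a b
    rw [hgradh, hgradh]
    simpa [sub_sub_sub_cancel_right] using hlip a b
  have d1 := descent_lemma h hdiff C hliph x (x - (1/C) • gradient h x)
  have e1 : (x - (1/C) • gradient h x) - x = -((1/C) • gradient h x) := by abel
  rw [e1] at d1
  have e2 : ⟪gradient h x, -((1/C) • gradient h x)⟫ = -(1/C) * ‖gradient h x‖ ^ 2 := by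
    rw [inner_neg_right, real_inner_smul_right, real_inner_self_eq_norm_sq]
    ring
  have e3 : ‖-((1/C) • gradient h x)‖ ^ 2 = (1/C)^2 * ‖gradient h x‖ ^ 2 := by
    rw [norm_neg, norm_smul, Real.norm_eq_abs, mul_pow, sq_abs]
  rw [e2, e3] at d1
  have d2 : h y ≤ h (x - (1/C) • gradient h x) := by
    have := convex_first_order f hconv hf y (x - (1/C) • gradient h x)
    simp only [hh]
    rw [inner_sub_right] at this
    linarith [this]
  have e4 : -(1/C) * ‖gradient h x‖^2 + C/2 * ((1/C)^2 * ‖gradient h x‖^2)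
      = -(1/(2*C)) * ‖gradient h x‖^2 := by
    field_simp
    ring
  have d3 : h y ≤ h x - 1/(2*C) * ‖gradient h x‖^2 := by
    have := le_trans d2 d1
    nlinarith [this, e4]
  have h2C : (0:ℝ) < 2*C := by linarith
  have d4 : 1/(2*C) * ‖gradient h x‖^2 ≤ h x - h y := by linarith
  have d5 := mul_le_mul_of_nonneg_left d4 (le_of_lt h2C)
  have e5 : (2*C) * (1/(2*C) * ‖gradient h x‖^2) = ‖gradient h x‖^2 := by
    field_simp
  calc ‖gradient f x - gradient f y‖ ^ 2 = ‖gradient h x‖ ^ 2 := by rw [hgradh]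
    _ ≤ 2*C*(h x - h y) := by rw [← e5]; exact d5
    _ = 2*C*(f x - f y - ⟪gradient f y, x - y⟫) := by
        simp only [hh]
        rw [inner_sub_right]
        ring

lemma inner_gradient_avg {n : ℕ} (hn : 0 < n) (fi : Fin n → E → ℝ) (f : E → ℝ)
    (hf : ∀ x, f x = (∑ i, fi i x) / n) (hdiffi : ∀ i, Differentiable ℝ (fi i)) (x v : E) :
    ⟪gradient f x, v⟫ = (∑ i, ⟪gradient (fi i) x, v⟫) / n := by
  have hD : HasFDerivAt (fun x : E => (n:ℝ)⁻¹ * (∑ i, fi i x))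
      ((n:ℝ)⁻¹ • (∑ i, fderiv ℝ (fi i) x)) x :=
    (HasFDerivAt.fun_sum (fun i _ => (hdiffi i x).hasFDerivAt)).const_mul _
  have hf' : f = fun x => (n:ℝ)⁻¹ * (∑ i, fi i x) := by
    funext z; rw [hf z, div_eq_inv_mul]
  rw [inner_gradient, hf', hD.fderiv]
  simp only [ContinuousLinearMap.coe_smul', Pi.smul_apply, ContinuousLinearMap.coe_sum',
    Finset.sum_apply, smul_eq_mul]
  rw [div_eq_inv_mul]
  congr 1
  exact Finset.sum_congr rfl fun i _ => (inner_gradient (fi i) x v).symm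

lemma gradient_min_zero (f : E → ℝ) (xstar : E) (hmin : ∀ y, f xstar ≤ f y) :
    gradient f xstar = 0 := by
  have h0 : fderiv ℝ f xstar = 0 :=
    IsLocalMin.fderiv_eq_zero (Filter.Eventually.of_forall fun y => hmin y)
  rw [gradient, h0, map_zero]

lemma step_bound {n : ℕ} (hn : 0 < n) (μ α Lmax σstar L : ℝ) (hμ : 0 < μ)
    (fi : Fin n → E → ℝ) (f : E → ℝ)
    (hf : ∀ x, f x = (∑ i, fi i x) / n)
    (hconv : ∀ i, ConvexOn ℝ Set.univ (fi i))
    (hdiffi : ∀ i, Differentiable ℝ (fi i))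
    (hdifff : Differentiable ℝ f)
    (hlipi' : ∀ i, ∀ x y : E, ‖gradient (fi i) x - gradient (fi i) y‖ ≤ Lmax * ‖x - y‖)
    (hlipf : ∀ x y : E, ‖gradient f x - gradient f y‖ ≤ L * ‖x - y‖)
    (xstar : E) (hmin : ∀ y, f xstar ≤ f y)
    (hPL : ∀ x, f x - f xstar ≤ 1 / (2 * μ) * ‖gradient f x‖ ^ 2)
    (hσ : σstar = (∑ i, ‖gradient (fi i) xstar‖ ^ 2) / n)
    (hα : 0 < α) (hLpos : 0 < L) (hLmaxpos : 0 < Lmax)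
    (hstep : 2 * L * Lmax * α ≤ μ) (x : E) :
    (∑ i, f (x - α • gradient (fi i) x)) / n
      ≤ (1 - α * μ) * (f x - f xstar) + f xstar + L * α ^ 2 * σstar := by
  have hn' : (0:ℝ) < n := Nat.cast_pos.mpr hn
  set G : Fin n → E := fun i => gradient (fi i) x with hG
  set Gs : Fin n → E := fun i => gradient (fi i) xstar with hGs
  set g : E := gradient f x with hg
  have hgz : gradient f xstar = 0 := gradient_min_zero f xstar hmin
  -- descent per sample
  have A1 : ∀ i, f (x - α • G i) ≤ f x - α * ⟪g, G i⟫ + L / 2 * (α ^ 2 * ‖G i‖ ^ 2) := by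
    intro i
    have hd := descent_lemma f hdifff L hlipf x (x - α • G i)
    have e1 : (x - α • G i) - x = -(α • G i) := by abel
    rw [e1] at hd
    have e2 : ⟪g, -(α • G i)⟫ = -(α * ⟪g, G i⟫) := by
      rw [inner_neg_right, real_inner_smul_right]
    have e3 : ‖-(α • G i)‖ ^ 2 = α ^ 2 * ‖G i‖ ^ 2 := by
      rw [norm_neg, norm_smul, Real.norm_eq_abs, mul_pow, sq_abs]
    rw [e2, e3] at hd
    linarith
  -- sum of inner products
  have A2 : ∑ i, ⟪g, G i⟫ = n * ‖g‖ ^ 2 := by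
    have := inner_gradient_avg hn fi f hf hdiffi x g
    rw [real_inner_self_eq_norm_sq] at this
    have e : ∑ i, ⟪g, G i⟫ = ∑ i, ⟪G i, g⟫ := by
      exact Finset.sum_congr rfl fun i _ => real_inner_comm _ _
    rw [e]
    have h2 := (div_eq_iff (ne_of_gt hn')).mp this.symm
    linarith [h2]
  -- sum of star gradients against any vector is zero
  have A0 : ∑ i, ⟪Gs i, x - xstar⟫ = 0 := by
    have := inner_gradient_avg hn fi f hf hdiffi xstar (x - xstar)
    rw [hgz] at this
    simp only [inner_zero_left] at this
    have := (div_eq_iff (ne_of_gt hn')).mp this.symm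
    linarith [this]
  -- variance decomposition
  have A3 : ∀ i, ‖G i‖ ^ 2 ≤ 2 * ‖G i - Gs i‖ ^ 2 + 2 * ‖Gs i‖ ^ 2 := by
    intro i
    have h1 : ‖G i‖ ≤ ‖G i - Gs i‖ + ‖Gs i‖ := by
      calc ‖G i‖ = ‖(G i - Gs i) + Gs i‖ := by rw [sub_add_cancel]
        _ ≤ ‖G i - Gs i‖ + ‖Gs i‖ := norm_add_le _ _
    nlinarith [h1, sq_nonneg (‖G i - Gs i‖ - ‖Gs i‖), norm_nonneg (G i),
      norm_nonneg (G i - Gs i), norm_nonneg (Gs i)]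
  have A4 : ∀ i, ‖G i - Gs i‖ ^ 2 ≤ 2 * Lmax * (fi i x - fi i xstar - ⟪Gs i, x - xstar⟫) :=
    fun i => cocoercivity (fi i) (hconv i) (hdiffi i) Lmax hLmaxpos (hlipi' i) x xstar
  have A5 : ∑ i, (fi i x - fi i xstar - ⟪Gs i, x - xstar⟫) = n * (f x - f xstar) := by
    rw [Finset.sum_sub_distrib, Finset.sum_sub_distrib, A0]
    have e1 : ∑ i, fi i x = n * f x := by
      rw [hf x]; field_simp
    have e2 : ∑ i, fi i xstar = n * f xstar := by
      rw [hf xstar]; field_simp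
    rw [e1, e2]; ring
  have A6 : ∑ i, ‖Gs i‖ ^ 2 = n * σstar := by
    rw [hσ]; field_simp; rfl
  -- second moment bound
  have SB : ∑ i, ‖G i‖ ^ 2 ≤ 4 * Lmax * n * (f x - f xstar) + 2 * n * σstar := by
    calc ∑ i, ‖G i‖ ^ 2 ≤ ∑ i, (2 * ‖G i - Gs i‖ ^ 2 + 2 * ‖Gs i‖ ^ 2) :=
          Finset.sum_le_sum fun i _ => A3 i
      _ = 2 * ∑ i, ‖G i - Gs i‖ ^ 2 + 2 * ∑ i, ‖Gs i‖ ^ 2 := by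
          rw [Finset.sum_add_distrib, Finset.mul_sum, Finset.mul_sum]
      _ ≤ 2 * ∑ i, (2 * Lmax * (fi i x - fi i xstar - ⟪Gs i, x - xstar⟫)) + 2 * (n * σstar) := by
          rw [A6]
          have := Finset.sum_le_sum fun i (_ : i ∈ Finset.univ) => A4 i
          linarith [this]
      _ = 4 * Lmax * n * (f x - f xstar) + 2 * n * σstar := by
          rw [← Finset.mul_sum, A5]; ring
  -- combine
  have hΔ : 0 ≤ f x - f xstar := by linarith [hmin x]
  have hPLx : 2 * μ * (f x - f xstar) ≤ ‖g‖ ^ 2 := by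
    have := hPL x
    have h2μ : (0:ℝ) < 2 * μ := by linarith
    rw [div_mul_eq_mul_div, one_mul, le_div_iff₀ h2μ] at this
    linarith [this]
  have sumA1 : ∑ i, f (x - α • G i)
      ≤ n * f x - α * (n * ‖g‖ ^ 2) + L / 2 * α ^ 2 * (∑ i, ‖G i‖ ^ 2) := by
    calc ∑ i, f (x - α • G i)
        ≤ ∑ i, (f x - α * ⟪g, G i⟫ + L / 2 * (α ^ 2 * ‖G i‖ ^ 2)) :=
          Finset.sum_le_sum fun i _ => A1 i
      _ = n * f x - α * (∑ i, ⟪g, G i⟫) + L / 2 * α ^ 2 * (∑ i, ‖G i‖ ^ 2) := by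
          rw [Finset.sum_add_distrib, Finset.sum_sub_distrib]
          simp_rw [← Finset.mul_sum]
          rw [Finset.sum_const, Finset.card_univ, Fintype.card_fin, nsmul_eq_mul]
          ring
      _ = n * f x - α * (n * ‖g‖ ^ 2) + L / 2 * α ^ 2 * (∑ i, ‖G i‖ ^ 2) := by rw [A2]
  have sumA2 : ∑ i, f (x - α • G i)
      ≤ n * f x - α * (n * ‖g‖ ^ 2) + L / 2 * α ^ 2 * (4 * Lmax * n * (f x - f xstar) + 2 * n * σstar) := by
    have hcoef : (0:ℝ) ≤ L / 2 * α ^ 2 := by positivity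
    nlinarith [sumA1, SB, mul_le_mul_of_nonneg_left SB hcoef]
  rw [div_le_iff₀ hn']
  have key : n * f x - α * (n * ‖g‖ ^ 2) + L / 2 * α ^ 2 * (4 * Lmax * n * (f x - f xstar) + 2 * n * σstar)
      ≤ ((1 - α * μ) * (f x - f xstar) + f xstar + L * α ^ 2 * σstar) * n := by
    have h1 : α * (2 * μ * (f x - f xstar)) ≤ α * ‖g‖ ^ 2 :=
      mul_le_mul_of_nonneg_left hPLx (le_of_lt hα)
    have h2 : 2 * L * Lmax * α ^ 2 * (f x - f xstar) ≤ α * μ * (f x - f xstar) := by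
      have hh := mul_le_mul_of_nonneg_right hstep (mul_nonneg hα.le hΔ)
      nlinarith [hh]
    nlinarith [h1, h2, hn']
  calc ∑ i, f (x - α • G i)
      ≤ n * f x - α * (n * ‖g‖ ^ 2) + L / 2 * α ^ 2 * (4 * Lmax * n * (f x - f xstar) + 2 * n * σstar) := sumA2
    _ ≤ ((1 - α * μ) * (f x - f xstar) + f xstar + L * α ^ 2 * σstar) * n := key

/-- The SGD trajectory as a function of the (finite) sequence of sampled indices. -/
noncomputable def sgdTraj {d n : ℕ}
    (upd : Fin n → EuclideanSpace ℝ (Fin d) → EuclideanSpace ℝ (Fin d))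
    (x0 : EuclideanSpace ℝ (Fin d)) :
    (t : ℕ) → (Fin t → Fin n) → EuclideanSpace ℝ (Fin d)
  | 0, _ => x0
  | (t + 1), ω => upd (ω (Fin.last t)) (sgdTraj upd x0 t (fun s => ω s.castSucc))

def snocEquiv (s n : ℕ) : ((Fin s → Fin n) × Fin n) ≃ (Fin (s+1) → Fin n) where
  toFun := fun p => Fin.snoc p.1 p.2
  invFun := fun ω => (fun j => ω j.castSucc, ω (Fin.last s))
  left_inv := fun p => by
    ext j
    · simp [Fin.snoc_castSucc]
    · simp [Fin.snoc_last]
  right_inv := fun ω => Fin.snoc_init_self ω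

lemma sgdTraj_snoc {d n : ℕ} (upd : Fin n → EuclideanSpace ℝ (Fin d) → EuclideanSpace ℝ (Fin d))
    (x0 : EuclideanSpace ℝ (Fin d)) (s : ℕ) (ω' : Fin s → Fin n) (i : Fin n) :
    sgdTraj upd x0 (s+1) (Fin.snoc ω' i) = upd i (sgdTraj upd x0 s ω') := by
  show upd ((Fin.snoc ω' i : Fin (s+1) → Fin n) (Fin.last s))
      (sgdTraj upd x0 s (fun j => (Fin.snoc ω' i : Fin (s+1) → Fin n) j.castSucc))
      = upd i (sgdTraj upd x0 s ω')
  simp [Fin.snoc_last, Fin.snoc_castSucc]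

lemma sum_split {d n : ℕ} (upd : Fin n → EuclideanSpace ℝ (Fin d) → EuclideanSpace ℝ (Fin d))
    (x0 : EuclideanSpace ℝ (Fin d)) (f : EuclideanSpace ℝ (Fin d) → ℝ) (s : ℕ) :
    (∑ ω : Fin (s+1) → Fin n, f (sgdTraj upd x0 (s+1) ω))
      = ∑ ω' : Fin s → Fin n, ∑ i : Fin n, f (upd i (sgdTraj upd x0 s ω')) := by
  rw [← Fintype.sum_equiv (snocEquiv s n)
    (fun p : (Fin s → Fin n) × Fin n => f (upd p.2 (sgdTraj upd x0 s p.1)))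
    (fun ω => f (sgdTraj upd x0 (s+1) ω))
    (fun p => by simp only [snocEquiv, Equiv.coe_fn_mk]; exact (congrArg f (sgdTraj_snoc upd x0 s p.1 p.2)).symm)]
  rw [Fintype.sum_prod_type]

/-- SGD convergence under the PL condition with constant stepsize. -/
theorem sgd_pl_convergence (d n : ℕ) (hn : 0 < n)
    (μ α Lmax σstar L : ℝ) (hμ : 0 < μ)
    (fi : Fin n → EuclideanSpace ℝ (Fin d) → ℝ) (Li : Fin n → ℝ)
    (f : EuclideanSpace ℝ (Fin d) → ℝ)
    (hf : ∀ x, f x = (∑ i, fi i x) / n)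
    (hL : L = (∑ i, Li i) / n)
    (hconv : ∀ i, ConvexOn ℝ Set.univ (fi i))
    (hdiffi : ∀ i, Differentiable ℝ (fi i))
    (hdifff : Differentiable ℝ f)
    (hlipi : ∀ i x y, ‖gradient (fi i) x - gradient (fi i) y‖ ≤ Li i * ‖x - y‖)
    (hlipf : ∀ x y, ‖gradient f x - gradient f y‖ ≤ L * ‖x - y‖)
    (hLmax : IsGreatest (Set.range Li) Lmax)
    (xstar : EuclideanSpace ℝ (Fin d)) (hmin : ∀ y, f xstar ≤ f y)
    (hPL : ∀ x, f x - f xstar ≤ 1 / (2 * μ) * ‖gradient f x‖ ^ 2)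
    (hσ : σstar = (∑ i, ‖gradient (fi i) xstar‖ ^ 2) / n)
    (hα : 0 < α) (hα2 : α ≤ μ / (2 * L * Lmax))
    (x0 : EuclideanSpace ℝ (Fin d)) (t : ℕ) :
    (∑ ω : Fin t → Fin n,
        f (sgdTraj (fun i y => y - α • gradient (fi i) y) x0 t ω)) / (n : ℝ) ^ t
        - f xstar ≤
      (1 - α * μ) ^ t * (f x0 - f xstar) + (α * L / μ) * σstar := by
  have hn' : (0:ℝ) < n := Nat.cast_pos.mpr hn
  have hσnn : 0 ≤ σstar := by rw [hσ]; positivity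
  set upd : Fin n → EuclideanSpace ℝ (Fin d) → EuclideanSpace ℝ (Fin d) :=
    fun i y => y - α • gradient (fi i) y with hupd
  have hNt : (0:ℝ) < (n:ℝ)^t := by positivity
  rcases subsingleton_or_nontrivial (EuclideanSpace ℝ (Fin d)) with hsub | hnt
  · -- degenerate case: the space is a single point
    have hσ0 : σstar = 0 := by
      rw [hσ]
      have hz : ∀ i : Fin n, gradient (fi i) xstar = 0 := fun i => Subsingleton.elim _ _
      simp [hz]
    have hx0 : x0 = xstar := Subsingleton.elim _ _
    have hLHS : (∑ ω : Fin t → Fin n, f (sgdTraj upd x0 t ω)) = (n:ℝ)^t * f xstar := by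
      calc (∑ ω : Fin t → Fin n, f (sgdTraj upd x0 t ω))
          = ∑ _ω : Fin t → Fin n, f xstar :=
            Finset.sum_congr rfl (fun ω _ => by rw [Subsingleton.elim (sgdTraj upd x0 t ω) xstar])
        _ = ((Fintype.card (Fin t → Fin n)) : ℝ) * f xstar := by
            rw [Finset.sum_const, Finset.card_univ, nsmul_eq_mul]
        _ = (n:ℝ)^t * f xstar := by
            rw [Fintype.card_fun]
            push_cast
            simp
    rw [hLHS, hσ0, hx0]
    have e : (n:ℝ)^t * f xstar / (n:ℝ)^t = f xstar := by field_simp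
    rw [e]
    simp
  · -- nondegenerate case
    obtain ⟨u, hu⟩ := exists_ne (0 : EuclideanSpace ℝ (Fin d))
    obtain ⟨j, hj⟩ := hLmax.1
    have hunorm : 0 < ‖u‖ := norm_pos_iff.mpr hu
    have hLj : 0 ≤ Li j := by
      have h := hlipi j u 0
      rw [sub_zero] at h
      by_contra hneg
      push_neg at hneg
      nlinarith [norm_nonneg (gradient (fi j) u - gradient (fi j) 0)]
    have hLmaxnn : 0 ≤ Lmax := hj ▸ hLj
    have h2LL : 0 < 2 * L * Lmax := by
      by_contra hc
      push_neg at hc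
      have : μ / (2 * L * Lmax) ≤ 0 := div_nonpos_iff.mpr (Or.inl ⟨hμ.le, hc⟩)
      linarith [hα2]
    have hLmaxpos : 0 < Lmax := by
      rcases lt_or_eq_of_le hLmaxnn with h | h
      · exact h
      · exfalso; rw [← h] at h2LL; linarith
    have hLpos : 0 < L := by nlinarith
    have hstep : 2 * L * Lmax * α ≤ μ := by
      rw [le_div_iff₀ h2LL] at hα2
      linarith [hα2]
    by_cases hconst : ∀ z : EuclideanSpace ℝ (Fin d), f z = f xstar
    · have hLHS : (∑ ω : Fin t → Fin n, f (sgdTraj upd x0 t ω)) = (n:ℝ)^t * f xstar := by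
        calc (∑ ω : Fin t → Fin n, f (sgdTraj upd x0 t ω))
            = ∑ _ω : Fin t → Fin n, f xstar :=
              Finset.sum_congr rfl (fun ω _ => by rw [hconst])
          _ = ((Fintype.card (Fin t → Fin n)) : ℝ) * f xstar := by
              rw [Finset.sum_const, Finset.card_univ, nsmul_eq_mul]
          _ = (n:ℝ)^t * f xstar := by
              rw [Fintype.card_fun]
              push_cast
              simp
      rw [hLHS, hconst x0]
      have e : (n:ℝ)^t * f xstar / (n:ℝ)^t = f xstar := by field_simp
      rw [e, sub_self]
      simp only [sub_self, mul_zero, zero_add]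
      exact mul_nonneg (div_nonneg (mul_nonneg hα.le hLpos.le) hμ.le) hσnn
    · push_neg at hconst
      obtain ⟨z, hz⟩ := hconst
      have hzgt : f xstar < f z := lt_of_le_of_ne (hmin z) (Ne.symm hz)
      have hgsq : ‖gradient f z‖^2 ≤ 2*L*(f z - f xstar) := by
        have hd := descent_lemma f hdifff L hlipf z (z - (1/L) • gradient f z)
        have e1 : (z - (1/L) • gradient f z) - z = -((1/L) • gradient f z) := by abel
        rw [e1] at hd
        have e2 : ⟪gradient f z, -((1/L) • gradient f z)⟫ = -(1/L) * ‖gradient f z‖ ^ 2 := by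
          rw [inner_neg_right, real_inner_smul_right, real_inner_self_eq_norm_sq]
          ring
        have e3 : ‖-((1/L) • gradient f z)‖ ^ 2 = (1/L)^2 * ‖gradient f z‖ ^ 2 := by
          rw [norm_neg, norm_smul, Real.norm_eq_abs, mul_pow, sq_abs]
        rw [e2, e3] at hd
        have hm := hmin (z - (1/L) • gradient f z)
        have e4 : -(1/L) * ‖gradient f z‖^2 + L/2 * ((1/L)^2 * ‖gradient f z‖^2)
            = -(1/(2*L)) * ‖gradient f z‖^2 := by
          field_simp
          ring
        have d3 : f xstar ≤ f z - 1/(2*L) * ‖gradient f z‖^2 := by nlinarith [hm, hd, e4]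
        have h2L : (0:ℝ) < 2*L := by linarith
        have d4 : 1/(2*L) * ‖gradient f z‖^2 ≤ f z - f xstar := by linarith
        have d5 := mul_le_mul_of_nonneg_left d4 (le_of_lt h2L)
        have e5 : (2*L) * (1/(2*L) * ‖gradient f z‖^2) = ‖gradient f z‖^2 := by field_simp
        linarith [d5, e5.symm.le]
      have hμL : μ ≤ L := by
        have hp := hPL z
        rw [div_mul_eq_mul_div, one_mul, le_div_iff₀ (by linarith : (0:ℝ) < 2*μ)] at hp
        nlinarith [hp, hgsq, hzgt]
      have hLLmax : L ≤ Lmax := by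
        rw [hL, div_le_iff₀ hn']
        have hsum : ∑ i, Li i ≤ ∑ _i : Fin n, Lmax :=
          Finset.sum_le_sum (fun i _ => hLmax.2 ⟨i, rfl⟩)
        rw [Finset.sum_const, Finset.card_univ, nsmul_eq_mul, Fintype.card_fin] at hsum
        linarith
      have hαμ1 : α * μ ≤ 1 := by
        have hμLmax : μ ≤ Lmax := le_trans hμL hLLmax
        nlinarith [mul_le_mul_of_nonneg_right hstep hμ.le,
          mul_le_mul hμL hμLmax hμ.le hLpos.le, h2LL]
      have h1αμ : 0 ≤ 1 - α * μ := by linarith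
      have hστ : 0 ≤ α*L/μ*σstar :=
        mul_nonneg (div_nonneg (mul_nonneg hα.le hLpos.le) hμ.le) hσnn
      have hstepb : ∀ x, (∑ i, f (upd i x))
          ≤ ((1 - α*μ) * (f x - f xstar) + f xstar + L*α^2*σstar) * n := by
        intro x
        have hb := step_bound hn μ α Lmax σstar L hμ fi f hf hconv hdiffi hdifff
          (fun i x y => le_trans (hlipi i x y)
            (mul_le_mul_of_nonneg_right (hLmax.2 ⟨i, rfl⟩) (norm_nonneg _)))
          hlipf xstar hmin hPL hσ hα hLpos hLmaxpos hstep x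
        rw [div_le_iff₀ hn'] at hb
        exact hb
      have main : ∀ s : ℕ, (∑ ω : Fin s → Fin n, f (sgdTraj upd x0 s ω)) / (n:ℝ)^s
          ≤ (1 - α*μ)^s * (f x0 - f xstar) + (α*L/μ)*σstar + f xstar := by
        intro s
        induction s with
        | zero =>
          have h0 : (∑ ω : Fin 0 → Fin n, f (sgdTraj upd x0 0 ω)) = f x0 := by
            simp [sgdTraj]
          rw [h0]
          simp only [pow_zero, one_mul, div_one]
          linarith
        | succ s ih =>
          have hsplit := sum_split upd x0 f s
          have hNpos : (0:ℝ) < (n:ℝ)^s := by positivity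
          have T1 : (∑ ω : Fin (s+1) → Fin n, f (sgdTraj upd x0 (s+1) ω))
              ≤ ∑ ω' : Fin s → Fin n,
                ((1-α*μ)*(f (sgdTraj upd x0 s ω') - f xstar) + f xstar + L*α^2*σstar) * n := by
            rw [hsplit]
            exact Finset.sum_le_sum (fun ω' _ => hstepb _)
          have T2 : ∑ ω' : Fin s → Fin n,
                ((1-α*μ)*(f (sgdTraj upd x0 s ω') - f xstar) + f xstar + L*α^2*σstar) * n
              = ((1-α*μ)*((∑ ω' : Fin s → Fin n, f (sgdTraj upd x0 s ω')) - (n:ℝ)^s*f xstar)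
                  + (n:ℝ)^s*f xstar + (n:ℝ)^s*(L*α^2*σstar)) * n := by
            rw [← Finset.sum_mul]
            congr 1
            simp only [Finset.sum_add_distrib, Finset.sum_sub_distrib, Finset.sum_const,
              Finset.card_univ, Fintype.card_fun, Fintype.card_fin, nsmul_eq_mul,
              ← Finset.mul_sum]
            push_cast
            ring
          have ihm : (∑ ω' : Fin s → Fin n, f (sgdTraj upd x0 s ω'))
              ≤ ((1-α*μ)^s*(f x0 - f xstar) + (α*L/μ)*σstar + f xstar) * (n:ℝ)^s := by
            rw [div_le_iff₀ hNpos] at ih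
            exact ih
          have T3 : (1-α*μ)*((∑ ω' : Fin s → Fin n, f (sgdTraj upd x0 s ω')) - (n:ℝ)^s*f xstar)
              ≤ (1-α*μ)*(((1-α*μ)^s*(f x0 - f xstar) + (α*L/μ)*σstar)*(n:ℝ)^s) := by
            apply mul_le_mul_of_nonneg_left _ h1αμ
            nlinarith [ihm]
          rw [div_le_iff₀ (by positivity : (0:ℝ) < (n:ℝ)^(s+1))]
          calc (∑ ω : Fin (s+1) → Fin n, f (sgdTraj upd x0 (s+1) ω))
              ≤ ((1-α*μ)*((∑ ω' : Fin s → Fin n, f (sgdTraj upd x0 s ω')) - (n:ℝ)^s*f xstar)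
                  + (n:ℝ)^s*f xstar + (n:ℝ)^s*(L*α^2*σstar)) * n := by rw [← T2]; exact T1
            _ ≤ ((1-α*μ)*(((1-α*μ)^s*(f x0 - f xstar) + (α*L/μ)*σstar)*(n:ℝ)^s)
                  + (n:ℝ)^s*f xstar + (n:ℝ)^s*(L*α^2*σstar)) * n := by
                exact mul_le_mul_of_nonneg_right (add_le_add_left (add_le_add_left T3
                  ((n:ℝ)^s*f xstar)) ((n:ℝ)^s*(L*α^2*σstar))) hn'.le
            _ = ((1-α*μ)^(s+1) * (f x0 - f xstar) + (α*L/μ)*σstar + f xstar) * (n:ℝ)^(s+1) := by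
                rw [pow_succ (n:ℝ) s, pow_succ (1-α*μ) s]
                field_simp
                ring
      have hm := main t
      linarith [hm]
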